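/- An element a of a complex unital Banach algebra A has a g-Drazin inverse if and only if there exists an invertible u commuting with a such that au has strongly g-Drazin inverse, i.e., au − (au)² is quasinilpotent. -/

import Mathlib

open Filter Finset

/-- An element of a complex (Banach) algebra is quasinilpotent if its spectral radius is zero. -/
noncomputable def Quasinilpotent {A : Type*} [Ring A] [Algebra ℂ A] (q : A) : Prop :=
  spectralRadius ℂ q = 0

/-- `a` has a generalized Drazin inverse: some `b` with `ab = ba`, `b = bab`,
and `a - a²b` quasinilpotent. -/
noncomputable def HasGDrazin {A : Type*} [Ring A] [Algebra ℂ A] (a : A) : Prop :=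
  ∃ b : A, a * b = b * a ∧ b = b * a * b ∧ Quasinilpotent (a - a ^ 2 * b)

section Helpers

open ENNReal NNReal

/-- Coefficients of the Taylor series of √(1-4t). -/
private def cr : ℕ → ℝ
  | 0 => 1
  | (k+1) => -2 * catalan k

private lemma catalan_le_real (m : ℕ) : (catalan m : ℝ) ≤ 4 ^ m := by
  have h1 : catalan m ≤ m.centralBinom := by
    calc catalan m ≤ (m + 1) * catalan m := Nat.le_mul_of_pos_left _ (by omega)
      _ = m.centralBinom := succ_mul_catalan_eq_centralBinom m
  have h2 : m.centralBinom ≤ 2 ^ (2 * m) := by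
    unfold Nat.centralBinom
    calc (2 * m).choose m ≤ ∑ i ∈ Finset.range (2 * m + 1), (2 * m).choose i :=
          Finset.single_le_sum (fun i _ => Nat.zero_le _) (by simp; omega)
      _ = 2 ^ (2 * m) := Nat.sum_range_choose (2 * m)
  have : (catalan m : ℝ) ≤ ((2:ℕ) : ℝ) ^ (2 * m) := by exact_mod_cast h1.trans h2
  calc (catalan m : ℝ) ≤ ((2:ℕ):ℝ) ^ (2 * m) := this
    _ = 4 ^ m := by norm_num [pow_mul]

private lemma cr_abs_le (k : ℕ) : |cr k| ≤ 2 * 4 ^ k := by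
  cases k with
  | zero => simp [cr]
  | succ m =>
    rw [cr]
    rw [abs_mul]
    have h1 : |(-2 : ℝ)| = 2 := by norm_num
    have h2 : |(catalan m : ℝ)| = (catalan m : ℝ) := abs_of_nonneg (by positivity)
    rw [h1, h2]
    have := catalan_le_real m
    calc 2 * (catalan m : ℝ) ≤ 2 * 4 ^ m := by linarith
      _ ≤ 2 * 4 ^ (m + 1) := by
          have : (4:ℝ) ^ m ≤ 4 ^ (m+1) := by
            apply pow_le_pow_right₀ <;> norm_num
          linarith

private lemma cr_conv (n : ℕ) : ∑ kl ∈ Finset.HasAntidiagonal.antidiagonal n, cr kl.1 * cr kl.2 =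
    if n = 0 then 1 else if n = 1 then -4 else 0 := by
  match n with
  | 0 => simp [cr]
  | 1 =>
    rw [Finset.Nat.sum_antidiagonal_eq_sum_range_succ (fun i j => cr i * cr j)]
    simp [Finset.sum_range_succ, cr]
    norm_num
  | (m+2) =>
    rw [Finset.Nat.sum_antidiagonal_eq_sum_range_succ (fun i j => cr i * cr j)]
    simp only [if_neg (by omega : ¬ m + 2 = 0), if_neg (by omega : ¬ m + 2 = 1)]
    rw [show (m+2).succ = (m+2)+1 from rfl]
    rw [Finset.sum_range_succ' (fun k => cr k * cr (m + 2 - k))]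
    rw [Finset.sum_range_succ]
    have hmid : ∀ k ∈ Finset.range (m+1),
        cr (k+1) * cr (m + 2 - (k+1)) = 4 * ((catalan k : ℝ) * (catalan (m-k) : ℝ)) := by
      intro k hk
      have hk' : k ≤ m := by simpa [Nat.lt_succ_iff] using hk
      have : m + 2 - (k+1) = (m - k) + 1 := by omega
      rw [this, cr, cr]
      ring
    rw [Finset.sum_congr rfl hmid]
    rw [← Finset.mul_sum]
    have hcat : ∑ k ∈ Finset.range (m+1), ((catalan k : ℝ) * (catalan (m-k) : ℝ))
        = (catalan (m+1) : ℝ) := by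
      have := catalan_succ' m
      rw [Finset.Nat.sum_antidiagonal_eq_sum_range_succ (fun i j => catalan i * catalan j)] at this
      rw [show m.succ = m + 1 from rfl] at this
      push_cast [this]
      norm_num
    rw [hcat]
    have h1 : m + 2 - (m + 1 + 1) = 0 := by omega
    rw [h1]
    simp [cr]
    ring

variable {A : Type*} [NormedRing A] [NormedAlgebra ℂ A] [CompleteSpace A]

private lemma quasi_pow_small {q : A} (hq : spectralRadius ℂ q = 0) {ε : ℝ} (hε : 0 < ε) :
    ∀ᶠ n in atTop, ‖q ^ n‖ ≤ ε ^ n := by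
  have h := spectrum.pow_nnnorm_pow_one_div_tendsto_nhds_spectralRadius q
  rw [hq] at h
  have h2 : ∀ᶠ n : ℕ in atTop, (‖q ^ n‖₊ : ℝ≥0∞) ^ (1 / (n : ℝ)) < ENNReal.ofReal ε :=
    h.eventually_lt_const (ENNReal.ofReal_pos.mpr hε)
  filter_upwards [h2, eventually_ge_atTop 1] with n hn hn1
  have hn0 : n ≠ 0 := by omega
  have h3 : ((‖q ^ n‖₊ : ℝ≥0∞) ^ (1 / (n : ℝ))) ^ n ≤ (ENNReal.ofReal ε) ^ n :=
    pow_le_pow_left' hn.le n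
  rw [one_div, ENNReal.rpow_inv_natCast_pow hn0] at h3
  have h4 : (‖q ^ n‖₊ : ℝ≥0∞) ≤ ENNReal.ofReal (ε ^ n) := by
    rwa [← ENNReal.ofReal_pow hε.le] at h3
  have h5 : (‖q ^ n‖₊ : ℝ) ≤ ε ^ n := by
    have := ENNReal.toReal_mono (by simp) h4
    simpa [ENNReal.toReal_ofReal (by positivity : (0:ℝ) ≤ ε ^ n)] using this
  simpa using h5

private lemma quasi_of_pow_small {x : A} (h : ∀ ε : ℝ, 0 < ε → ∀ᶠ n in atTop, ‖x ^ n‖ ≤ ε ^ n) :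
    spectralRadius ℂ x = 0 := by
  refine le_antisymm ?_ zero_le
  set C : ℝ≥0∞ := (‖(1 : A)‖₊ : ℝ≥0∞) with hC
  have key : ∀ ε : ℝ, 0 < ε → spectralRadius ℂ x ≤ ENNReal.ofReal ε * (C + 1) := by
    intro ε hε
    obtain ⟨N, hN⟩ := (h ε hε).exists_forall_of_atTop
    have hb := spectrum.spectralRadius_le_pow_nnnorm_pow_one_div ℂ x N
    have h1 : (‖x ^ (N + 1)‖₊ : ℝ≥0∞) ^ (1 / ((N : ℝ) + 1)) ≤ ENNReal.ofReal ε := by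
      have hle : (‖x ^ (N + 1)‖₊ : ℝ≥0∞) ≤ ENNReal.ofReal (ε ^ (N + 1)) := by
        have := hN (N + 1) (by omega)
        rw [← ENNReal.ofReal_coe_nnreal]
        exact ENNReal.ofReal_le_ofReal (by simpa using this)
      calc (‖x ^ (N + 1)‖₊ : ℝ≥0∞) ^ (1 / ((N : ℝ) + 1))
          ≤ (ENNReal.ofReal (ε ^ (N + 1))) ^ (1 / ((N : ℝ) + 1)) :=
            ENNReal.rpow_le_rpow hle (by positivity)
        _ = ENNReal.ofReal ε := by
            rw [ENNReal.ofReal_rpow_of_pos (by positivity)]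
            congr 1
            rw [one_div, show ((N : ℝ) + 1) = ((N + 1 : ℕ) : ℝ) by push_cast; ring]
            exact Real.pow_rpow_inv_natCast hε.le (by omega)
    have h2 : C ^ (1 / ((N : ℝ) + 1)) ≤ C + 1 := by
      rcases le_total C 1 with hC1 | hC1
      · calc C ^ (1 / ((N : ℝ) + 1)) ≤ 1 ^ (1 / ((N : ℝ) + 1)) :=
              ENNReal.rpow_le_rpow hC1 (by positivity)
          _ = 1 := ENNReal.one_rpow _
          _ ≤ C + 1 := le_add_self
      · calc C ^ (1 / ((N : ℝ) + 1)) ≤ C ^ (1 : ℝ) := by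
              refine ENNReal.rpow_le_rpow_of_exponent_le hC1 ?_
              rw [div_le_one (by positivity)]
              linarith [Nat.cast_nonneg (α := ℝ) N]
          _ = C := ENNReal.rpow_one _
          _ ≤ C + 1 := le_self_add
    calc spectralRadius ℂ x ≤ _ := hb
      _ ≤ ENNReal.ofReal ε * (C + 1) := mul_le_mul' h1 h2
  have hCne : C + 1 ≠ ⊤ := by simp [hC]
  have htend : Tendsto (fun k : ℕ => ENNReal.ofReal ((1/2 : ℝ) ^ k) * (C + 1)) atTop (nhds 0) := by
    have h0 : Tendsto (fun k : ℕ => ENNReal.ofReal ((1/2 : ℝ) ^ k)) atTop (nhds 0) := by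
      rw [← ENNReal.ofReal_zero]
      exact (ENNReal.continuous_ofReal.tendsto 0).comp
        (tendsto_pow_atTop_nhds_zero_of_lt_one (by norm_num) (by norm_num))
    simpa using ENNReal.Tendsto.mul_const h0 (Or.inr hCne)
  exact ge_of_tendsto' htend fun k => key _ (by positivity)

private lemma quasi_mul {q z : A} (hq : spectralRadius ℂ q = 0) (hz : Commute q z) :
    spectralRadius ℂ (q * z) = 0 := by
  apply quasi_of_pow_small
  intro ε hε
  set M : ℝ := ‖z‖ + 1 with hM
  have hM0 : 0 < M := by positivity
  filter_upwards [quasi_pow_small hq (show (0:ℝ) < ε / M by positivity),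
    eventually_ge_atTop 1] with n hn hn1
  have h1 : (q * z) ^ n = q ^ n * z ^ n := hz.mul_pow n
  calc ‖(q * z) ^ n‖ = ‖q ^ n * z ^ n‖ := by rw [h1]
    _ ≤ ‖q ^ n‖ * ‖z ^ n‖ := norm_mul_le _ _
    _ ≤ (ε / M) ^ n * M ^ n := by
        refine mul_le_mul hn ?_ (norm_nonneg _) (by positivity)
        calc ‖z ^ n‖ ≤ ‖z‖ ^ n := norm_pow_le' z (by omega)
          _ ≤ M ^ n := by gcongr; simp [hM]
    _ = ε ^ n := by rw [← mul_pow]; congr 1; field_simp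

private lemma isUnit_one_sub_quasi {n : A} (hn : spectralRadius ℂ n = 0) : IsUnit (1 - n) := by
  have h1 : (1 : ℂ) ∉ spectrum ℂ n := by
    intro h
    have hle : (‖(1:ℂ)‖₊ : ℝ≥0∞) ≤ spectralRadius ℂ n := by
      unfold spectralRadius
      exact le_iSup₂ (f := fun k (_ : k ∈ spectrum ℂ n) => (‖k‖₊ : ℝ≥0∞)) 1 h
    rw [hn] at hle
    simp at hle
  have := spectrum.notMem_iff.mp h1
  rwa [map_one] at this

private lemma sqrt_exists {q : A} (hq : spectralRadius ℂ q = 0) :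
    ∃ s m : A, s * s = 1 - (4:ℝ) • q ∧ s - 1 = q * m ∧
      (∀ y : A, Commute y q → Commute y s) ∧ (∀ y : A, Commute y q → Commute y m) := by
  have hcomm : ∀ (c : ℕ → ℝ) (y : A), Commute y q →
      ∀ k, y * (c k • q ^ k) = (c k • q ^ k) * y := by
    intro c y hy k
    rw [mul_smul_comm, smul_mul_assoc, (hy.pow_right k).eq]
  have hsmall := quasi_pow_small hq (show (0:ℝ) < 1/8 by norm_num)
  have hsummand : ∀ (c : ℕ → ℝ) (B : ℝ), (∀ k, |c k| ≤ B * 4 ^ k) →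
      Summable (fun k => ‖c k • q ^ k‖) := by
    intro c B hB
    apply Summable.of_norm_bounded_eventually (g := fun k => B * (1/2) ^ k)
    · exact (summable_geometric_of_lt_one (by norm_num) (by norm_num)).mul_left B
    · rw [Nat.cofinite_eq_atTop]
      filter_upwards [hsmall] with k hk
      rw [Real.norm_eq_abs, abs_of_nonneg (norm_nonneg _), norm_smul, Real.norm_eq_abs]
      calc |c k| * ‖q ^ k‖ ≤ (B * 4 ^ k) * ((1/8) ^ k) := by
            have hBpos : (0:ℝ) ≤ B := by
              have h1 := hB 0
              have h2 := abs_nonneg (c 0)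
              simpa using by linarith
            exact mul_le_mul (hB k) hk (norm_nonneg _) (mul_nonneg hBpos (by positivity))
        _ = B * (1/2) ^ k := by
            rw [mul_assoc, ← mul_pow]
            norm_num
  have hBcr : ∀ k, |cr k| ≤ 2 * 4 ^ k := cr_abs_le
  have hBcr' : ∀ k, |cr (k+1)| ≤ 8 * 4 ^ k := by
    intro k
    calc |cr (k+1)| ≤ 2 * 4 ^ (k+1) := cr_abs_le (k+1)
      _ = 8 * 4 ^ k := by ring
  have hn1 : Summable (fun k => ‖cr k • q ^ k‖) := hsummand cr 2 hBcr
  have hn2 : Summable (fun k => ‖cr (k+1) • q ^ k‖) := hsummand (fun k => cr (k+1)) 8 hBcr'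
  have hs1 : Summable (fun k => cr k • q ^ k) := hn1.of_norm
  have hs2 : Summable (fun k => cr (k+1) • q ^ k) := hn2.of_norm
  set s : A := ∑' k, cr k • q ^ k with hs
  set m : A := ∑' k, cr (k+1) • q ^ k with hm
  refine ⟨s, m, ?_, ?_, ?_, ?_⟩
  · rw [hs, tsum_mul_tsum_eq_tsum_sum_antidiagonal_of_summable_norm hn1 hn1]
    have hinner : ∀ n : ℕ,
        (∑ kl ∈ Finset.HasAntidiagonal.antidiagonal n, (cr kl.1 • q ^ kl.1) * (cr kl.2 • q ^ kl.2))
        = (if n = 0 then (1:ℝ) else if n = 1 then -4 else 0) • q ^ n := by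
      intro n
      rw [← cr_conv n, Finset.sum_smul]
      apply Finset.sum_congr rfl
      intro kl hkl
      rw [Finset.HasAntidiagonal.mem_antidiagonal] at hkl
      rw [smul_mul_smul_comm, ← pow_add, hkl]
    simp_rw [hinner]
    rw [tsum_eq_sum (s := {0, 1}) (by
      intro b hb
      simp only [Finset.mem_insert, Finset.mem_singleton] at hb
      push_neg at hb
      rw [if_neg hb.1, if_neg hb.2, zero_smul])]
    rw [Finset.sum_pair (by norm_num)]
    norm_num
    module
  · rw [hs, Summable.tsum_eq_zero_add hs1]
    have h0 : cr 0 • q ^ 0 = 1 := by simp [cr]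
    have hterm : ∀ k : ℕ, cr (k+1) • q ^ (k+1) = q * (cr (k+1) • q ^ k) := by
      intro k
      rw [mul_smul_comm, ← pow_succ']
    simp_rw [h0, hterm]
    rw [Summable.tsum_mul_left q hs2, ← hm]
    abel
  · intro y hy
    show y * s = s * y
    rw [hs, ← Summable.tsum_mul_left y hs1, ← Summable.tsum_mul_right y hs1]
    exact tsum_congr (hcomm cr y hy)
  · intro y hy
    show y * m = m * y
    rw [hm, ← Summable.tsum_mul_left y hs2, ← Summable.tsum_mul_right y hs2]
    exact tsum_congr (hcomm (fun k => cr (k+1)) y hy)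

end Helpers

theorem stmt3 {A : Type*} [NormedRing A] [NormedAlgebra ℂ A] [CompleteSpace A] (a : A) :
    HasGDrazin a ↔ ∃ u : A, IsUnit u ∧ a * u = u * a ∧ Quasinilpotent (a * u - (a * u) ^ 2) := by
  constructor
  · rintro ⟨b, hab, hb, hq⟩
    have hba : b * a = a * b := hab.symm
    have hswap : ∀ t : A, b * (a * t) = a * (b * t) := fun t => by
      rw [← mul_assoc, hba, mul_assoc]
    have hred : a * (b * b) = b := by
      conv_rhs => rw [hb]
      rw [mul_assoc, ← hswap, ← mul_assoc, hba, mul_assoc]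
    have hred' : ∀ t : A, a * (b * (b * t)) = b * t := fun t => by
      rw [← mul_assoc, ← mul_assoc, mul_assoc a b b, hred]
    refine ⟨b + 1 - a * b, ⟨⟨b + 1 - a * b, a * a * b + 1 - a * b, ?_, ?_⟩, rfl⟩, ?_, ?_⟩
    · simp only [mul_add, add_mul, mul_sub, sub_mul, mul_one, one_mul, mul_assoc,
        neg_mul, mul_neg, hswap, hred, hred', hba]
      try abel
    · simp only [mul_add, add_mul, mul_sub, sub_mul, mul_one, one_mul, mul_assoc,
        neg_mul, mul_neg, hswap, hred, hred', hba]
      try abel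
    · simp only [mul_add, add_mul, mul_sub, sub_mul, mul_one, one_mul, mul_assoc,
        neg_mul, mul_neg, hswap, hred, hred', hba]
      try abel
    · have hq' : spectralRadius ℂ (a - a ^ 2 * b) = 0 := hq
      have hiden : a * (b + 1 - a * b) - (a * (b + 1 - a * b)) ^ 2
          = (a - a ^ 2 * b) * (1 - a * b - a * b - (a - a ^ 2 * b)) := by
        simp only [pow_two, mul_add, add_mul, mul_sub, sub_mul, mul_one, one_mul, mul_assoc,
          neg_mul, mul_neg, hswap, hred, hred', hba]
        try abel
      have hcz : (a - a ^ 2 * b) * (1 - a * b - a * b - (a - a ^ 2 * b))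
          = (1 - a * b - a * b - (a - a ^ 2 * b)) * (a - a ^ 2 * b) := by
        simp only [pow_two, mul_add, add_mul, mul_sub, sub_mul, mul_one, one_mul, mul_assoc,
          neg_mul, mul_neg, hswap, hred, hred', hba]
        try abel
      show spectralRadius ℂ _ = 0
      rw [hiden]
      exact quasi_mul hq' hcz
  · rintro ⟨u, hu, hau, hq⟩
    obtain ⟨U, rfl⟩ := hu
    set x : A := a * ↑U with hxdef
    have hq2 : spectralRadius ℂ (x - x * x) = 0 := by
      have h : spectralRadius ℂ (x - x ^ 2) = 0 := hq
      rwa [pow_two] at h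
    set q : A := x - x * x with hqdef
    -- basic commutation facts
    have hax : a * x = x * a := by
      rw [hxdef, mul_assoc, ← hau, ← mul_assoc]
    have hUx : (↑U : A) * x = x * ↑U := by
      rw [hxdef, ← mul_assoc, ← hau, mul_assoc]
    have cax : Commute a x := hax
    have cUx : Commute (↑U : A) x := hUx
    have cxq : Commute x q := (Commute.refl x).sub_right ((Commute.refl x).mul_right
      (Commute.refl x))
    have caq : Commute a q := cax.sub_right (cax.mul_right cax)
    have cUq : Commute (↑U : A) q := cUx.sub_right (cUx.mul_right cUx)
    have cUiq : Commute (↑U⁻¹ : A) q := cUq.units_inv_left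
    obtain ⟨s, m, hss, hsm, hcs, hcm⟩ := sqrt_exists hq2
    set t : A := 1 - x - x with htdef
    have htt : t * t = 1 - (4:ℝ) • q := by
      rw [htdef, hqdef]
      rw [show ((4:ℝ)) = ((4:ℕ):ℝ) by norm_num, Nat.cast_smul_eq_nsmul]
      noncomm_ring
    have cxt : Commute x t := ((Commute.one_right x).sub_right (Commute.refl x)).sub_right
      (Commute.refl x)
    have cat : Commute a t := ((Commute.one_right a).sub_right cax).sub_right cax
    have cUt : Commute (↑U : A) t := ((Commute.one_right _).sub_right cUx).sub_right cUx
    have ctq : Commute t q := (((Commute.one_left q).sub_left cxq).sub_left cxq).symm.symm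
    have cts : Commute t s := hcs t ctq
    have cas : Commute a s := hcs a caq
    have cUs : Commute (↑U : A) s := hcs (↑U) cUq
    have cxs : Commute x s := hcs x cxq
    have cqs : Commute q s := hcs q (Commute.refl q)
    have cqm : Commute q m := hcm q (Commute.refl q)
    -- s is a unit
    have h1s : (1 : A) - s = q * (-m) := by
      rw [← neg_sub s 1, hsm, ← mul_neg]
    have hq1s : spectralRadius ℂ ((1 : A) - s) = 0 := by
      rw [h1s]; exact quasi_mul hq2 cqm.neg_right
    have hsUnit : IsUnit s := by
      have := isUnit_one_sub_quasi hq1s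
      rwa [sub_sub_cancel] at this
    obtain ⟨S, hS⟩ := hsUnit
    set v : A := ↑S⁻¹ with hvdef
    have hsv : s * v = 1 := by rw [hvdef, ← hS]; exact S.mul_inv
    have hvs : v * s = 1 := by rw [hvdef, ← hS]; exact S.inv_mul
    have mkCv : ∀ y : A, Commute y s → Commute y v := by
      intro y hy
      have h : Commute y (↑S : A) := by rw [hS]; exact hy
      exact h.units_inv_right
    have ctv : Commute t v := mkCv t cts
    have cav : Commute a v := mkCv a cas
    have cUv : Commute (↑U : A) v := mkCv _ cUs
    have cxv : Commute x v := mkCv x cxs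
    have cqv : Commute q v := mkCv q cqs
    -- the idempotent e
    set e : A := (2:ℝ)⁻¹ • (1 - t * v) with hedef
    have mkCe : ∀ y : A, Commute y t → Commute y v → Commute y e := by
      intro y h1 h2
      rw [hedef]
      exact ((Commute.one_right y).sub_right (h1.mul_right h2)).smul_right _
    have cqe : Commute q e := mkCe q ctq.symm cqv
    have cxe : Commute x e := mkCe x cxt cxv
    have cae : Commute a e := mkCe a cat cav
    have cUe : Commute (↑U : A) e := mkCe _ cUt cUv
    have cUit : Commute (↑U⁻¹ : A) t := cUt.units_inv_left
    have cUiv : Commute (↑U⁻¹ : A) v := by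
      have h1 : Commute (↑U : A) (↑S : A) := by rw [hS]; exact cUs
      exact (h1.units_inv_left).units_inv_right
    have cUie : Commute (↑U⁻¹ : A) e := mkCe _ cUit cUiv
    have htv2 : t * v * (t * v) = 1 := by
      have h1 : t * v * (t * v) = t * (v * t) * v := by noncomm_ring
      rw [h1, ctv.symm.eq]
      have h2 : t * (t * v) * v = t * t * (v * v) := by noncomm_ring
      rw [h2, htt, ← hss]
      have h3 : s * s * (v * v) = s * (s * v * v) := by noncomm_ring
      rw [h3, hsv, one_mul, hsv]
    have hexp : (1 - t * v) * (1 - t * v) = 1 - t * v - t * v + t * v * (t * v) := by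
      noncomm_ring
    have hee : e * e = e := by
      rw [hedef, smul_mul_smul_comm, hexp, htv2]
      module
    -- w = x - e is quasinilpotent: w = q * Zw
    set w : A := x - e with hwdef
    set Zw : A := (2:ℝ)⁻¹ • (t * (v * (-m))) with hZwdef
    have hv1 : v * (1 - s) = v - 1 := by rw [mul_sub, mul_one, hvs]
    have hw2 : w = (2:ℝ)⁻¹ • (t * (v - 1)) := by
      rw [mul_sub, mul_one, hwdef, hedef, htdef]
      module
    have hwq : w = q * Zw := by
      rw [hw2, ← hv1, h1s]
      rw [show v * (q * (-m)) = q * (v * (-m)) by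
        rw [← mul_assoc, cqv.symm.eq, mul_assoc]]
      rw [show t * (q * (v * (-m))) = q * (t * (v * (-m))) by
        rw [← mul_assoc, ctq.eq, mul_assoc]]
      rw [hZwdef, mul_smul_comm]
    have cqZw : Commute q Zw := by
      rw [hZwdef]
      exact ((ctq.symm).mul_right (cqv.mul_right cqm.neg_right)).smul_right _
    have cxw : Commute x w := (Commute.refl x).sub_right cxe
    have caw : Commute a w := cax.sub_right cae
    have cUw : Commute (↑U : A) w := cUx.sub_right cUe
    have cew : Commute e w := (cxe.symm).sub_right (Commute.refl e)
    -- the unit c' = 1 + w*e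
    set c' : A := 1 + w * e with hcdef
    have hwe_q : w * e = q * (Zw * e) := by rw [hwq, mul_assoc]
    have cq_Zwe : Commute q (Zw * e) := cqZw.mul_right cqe
    have hcUnit : IsUnit c' := by
      have hneg : spectralRadius ℂ (-(w * e)) = 0 := by
        rw [hwe_q, ← mul_neg]
        exact quasi_mul hq2 cq_Zwe.neg_right
      have := isUnit_one_sub_quasi hneg
      rwa [sub_neg_eq_add, ← hcdef] at this
    obtain ⟨G, hG⟩ := hcUnit
    set g : A := ↑G⁻¹ with hgdef
    have hgc : g * c' = 1 := by rw [hgdef, ← hG]; exact G.inv_mul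
    have mkCg : ∀ y : A, Commute y c' → Commute y g := by
      intro y hy
      have h : Commute y (↑G : A) := by rw [hG]; exact hy
      exact h.units_inv_right
    have cxc : Commute x c' := (Commute.one_right x).add_right (cxw.mul_right cxe)
    have cac : Commute a c' := (Commute.one_right a).add_right (caw.mul_right cae)
    have cec : Commute e c' := (Commute.one_right e).add_right (cew.mul_right (Commute.refl e))
    have cxg : Commute x g := mkCg x cxc
    have cag : Commute a g := mkCg a cac
    have ceg : Commute e g := mkCg e cec
    -- key identities
    have hxe2 : x * e = e + w * e := by
      rw [hwdef, sub_mul, hee]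
      abel
    have hce : c' * e = e + w * e := by
      rw [hcdef, add_mul, one_mul, mul_assoc, hee]
    set d : A := g * e with hddef
    have hxd : x * d = e := by
      rw [hddef, ← mul_assoc, cxg.eq, mul_assoc, hxe2, ← hce, ← mul_assoc, hgc, one_mul]
    have hed : e * d = d := by
      rw [hddef, ← mul_assoc, ceg.eq, mul_assoc, hee]
    have cad : Commute a d := cag.mul_right cae
    have cUit : Commute (↑U⁻¹ : A) t := cUt.units_inv_left
    have cUiv : Commute (↑U⁻¹ : A) v := by
      have h1 : Commute (↑U : A) (↑S : A) := by rw [hS]; exact cUs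
      exact (h1.units_inv_left).units_inv_right
    have cUie : Commute (↑U⁻¹ : A) e := mkCe _ cUit cUiv
    have ha' : x * ↑U⁻¹ = a := by rw [hxdef]; exact Units.mul_inv_cancel_right a U
    have hab' : a * (↑U * d) = e := by
      rw [← mul_assoc, ← hxdef, hxd]
    have hba' : (↑U : A) * d * a = e := by
      rw [mul_assoc, ← cad.eq, ← mul_assoc, ← hau, hxd]
    refine ⟨↑U * d, ?_, ?_, ?_⟩
    · exact hab'.trans hba'.symm
    · rw [hba']
      rw [show e * ((↑U : A) * d) = ↑U * (e * d) by
        rw [← mul_assoc, ← cUe.eq, mul_assoc], hed]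
    · show spectralRadius ℂ _ = 0
      have hstep1 : x - x * e = w * (1 - e) := by
        rw [hxe2, hwdef, mul_sub, mul_one]
        abel
      have hstep2 : x - x * e = q * (Zw * (1 - e)) := by
        rw [hstep1, hwq, mul_assoc]
      have hfin : a - a ^ 2 * (↑U * d) = q * (Zw * (1 - e) * ↑U⁻¹) := by
        rw [pow_two, mul_assoc, hab', ← ha']
        rw [mul_assoc x (↑U⁻¹ : A) e, cUie.eq, ← mul_assoc x e (↑U⁻¹ : A)]
        rw [← sub_mul, hstep2, mul_assoc]
      rw [hfin]
      exact quasi_mul hq2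
        ((cqZw.mul_right ((Commute.one_right q).sub_right cqe)).mul_right cUiq.symm)
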